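/- Let N be a positive integer. The linear operators J₀ and J₁ on functions f : ℤ/Nℤ → ℂ, defined by (J₀ f)(x) = f(x+1) + 2cos(2πx/N) f(x) + f(x−1) and (J₁ f)(x) = cos(π(2x+1)/N) f(x+1) + cos(π(2x−1)/N) f(x−1), both commute with the discrete Fourier transform F_N. Consequently, for every integer a, the operator J = J₁ − cos(π(2a+1)/N) J₀ commutes with F_N. -/

import Mathlib

open Complex

/-- The (non-normalized) discrete Fourier transform on `ZMod N`:
`(dft N f) k = ∑_{j=0}^{N-1} exp(-2πi j k / N) f(j)`. -/
noncomputable def dft (N : ℕ) (f : ZMod N → ℂ) : ZMod N → ℂ := fun k =>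
  ∑ j ∈ Finset.range N,
    Complex.exp (-(2 * Real.pi * Complex.I * (j : ℂ) * (k.val : ℂ)) / (N : ℂ)) * f (j : ZMod N)


/-- `(J₀ f)(x) = f(x+1) + 2cos(2πx/N) f(x) + f(x−1)`. -/
noncomputable def J0op (N : ℕ) (f : ZMod N → ℂ) : ZMod N → ℂ := fun x =>
  f (x + 1) + (2 * Real.cos (2 * Real.pi * (x.val : ℝ) / N) : ℝ) * f x + f (x - 1)

/-- `(J₁ f)(x) = cos(π(2x+1)/N) f(x+1) + cos(π(2x−1)/N) f(x−1)`. -/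
noncomputable def J1op (N : ℕ) (f : ZMod N → ℂ) : ZMod N → ℂ := fun x =>
  (Real.cos (Real.pi * (2 * (x.val : ℝ) + 1) / N) : ℝ) * f (x + 1) +
    (Real.cos (Real.pi * (2 * (x.val : ℝ) - 1) / N) : ℝ) * f (x - 1)

/-! ### Auxiliary material -/

noncomputable def myeps (N : ℕ) : ℂ := Complex.exp (Real.pi * Complex.I / N)

lemma myeps_ne (N : ℕ) : myeps N ≠ 0 := Complex.exp_ne_zero _

lemma my_sum_zmod (N : ℕ) [NeZero N] (g : ZMod N → ℂ) :
    ∑ j ∈ Finset.range N, g (j : ZMod N) = ∑ x : ZMod N, g x := by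
  refine Finset.sum_nbij' (fun j => (j : ZMod N)) (fun x => x.val)
    (fun a _ => Finset.mem_univ _) (fun x _ => Finset.mem_range.mpr x.val_lt)
    (fun a ha => ZMod.val_cast_of_lt (Finset.mem_range.mp ha))
    (fun x _ => by simp [ZMod.natCast_val, ZMod.cast_id]) (fun a _ => rfl)

lemma myeps_congr (N : ℕ) (hN : 0 < N) {m n : ℤ} (h : m ≡ n [ZMOD (2*N)]) :
    myeps N ^ m = myeps N ^ n := by
  have hne : myeps N ≠ 0 := myeps_ne N
  have hroot : myeps N ^ ((2*N : ℕ) : ℤ) = 1 := by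
    rw [myeps, ← Complex.exp_int_mul]
    have hN' : (N : ℂ) ≠ 0 := Nat.cast_ne_zero.mpr hN.ne'
    rw [show (((2*N : ℕ) : ℤ) : ℂ) * (Real.pi * Complex.I / N) = 2 * Real.pi * Complex.I by
      push_cast; field_simp]
    exact Complex.exp_two_pi_mul_I
  obtain ⟨t, ht⟩ := Int.modEq_iff_dvd.mp h
  have hn : n = m + ((2*N : ℕ) : ℤ) * t := by push_cast at ht ⊢; omega
  rw [hn, zpow_add₀ hne, zpow_mul, hroot, one_zpow, mul_one]

/-- Shift exponents: if `a ≡ b [ZMOD N]` then `ε^(2ac+d) = ε^(2bc+d)`. -/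
lemma myeps_congr2 (N : ℕ) (hN : 0 < N) {a b : ℤ} (h : a ≡ b [ZMOD (N:ℤ)]) (c d : ℤ) :
    myeps N ^ (2*a*c+d) = myeps N ^ (2*b*c+d) := by
  apply myeps_congr N hN
  obtain ⟨t, ht⟩ := Int.modEq_iff_dvd.mp h
  exact Int.modEq_iff_dvd.mpr ⟨t*c, by rw [show b = a + N*t by omega]; push_cast; ring⟩

lemma my_val_shift (N : ℕ) [NeZero N] (x : ZMod N) (s : ℤ) :
    (((x + (s : ZMod N)).val : ℤ)) ≡ (x.val : ℤ) + s [ZMOD (N:ℤ)] := by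
  rw [← ZMod.intCast_eq_intCast_iff]
  push_cast [ZMod.natCast_val, ZMod.cast_id]
  rfl

lemma my_dft_eq (N : ℕ) [NeZero N] (f : ZMod N → ℂ) (k : ZMod N) :
    dft N f k = ∑ x : ZMod N, myeps N ^ (-2 * (x.val:ℤ) * (k.val:ℤ)) * f x := by
  rw [dft, ← my_sum_zmod N (fun x => myeps N ^ (-2*(x.val:ℤ)*(k.val:ℤ)) * f x)]
  refine Finset.sum_congr rfl fun j hj => ?_
  simp only [ZMod.val_cast_of_lt (Finset.mem_range.mp hj)]
  congr 1
  rw [myeps, ← Complex.exp_int_mul]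
  congr 1
  push_cast
  ring

lemma my_cos_eq (N : ℕ) (m : ℤ) :
    ((Real.cos (Real.pi * m / N) : ℝ) : ℂ) = (myeps N ^ m + myeps N ^ (-m)) / 2 := by
  rw [Complex.ofReal_cos, Complex.cos, myeps, ← Complex.exp_int_mul, ← Complex.exp_int_mul]
  congr 2 <;> push_cast <;> ring

lemma myeps_neg2 (N : ℕ) (hN : 0 < N) {a b : ℤ} (h : a ≡ b [ZMOD (N:ℤ)]) (c : ℤ) :
    myeps N ^ (-2*a*c) = myeps N ^ (-2*b*c) := by
  rw [show -2*a*c = 2*a*(-c)+0 by ring, show -2*b*c = 2*b*(-c)+0 by ring]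
  exact myeps_congr2 N hN h (-c) 0

lemma myeps_neg2' (N : ℕ) (hN : 0 < N) {a b : ℤ} (h : a ≡ b [ZMOD (N:ℤ)]) (c : ℤ) :
    myeps N ^ (-2*c*a) = myeps N ^ (-2*c*b) := by
  rw [show -2*c*a = 2*a*(-c)+0 by ring, show -2*c*b = 2*b*(-c)+0 by ring]
  exact myeps_congr2 N hN h (-c) 0

lemma myeps_two (N : ℕ) (hN : 0 < N) {a b : ℤ} (h : a ≡ b [ZMOD (N:ℤ)]) (d : ℤ) :
    myeps N ^ (2*a+d) = myeps N ^ (2*b+d) := by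
  rw [show 2*a+d = 2*a*1+d by ring, show 2*b+d = 2*b*1+d by ring]
  exact myeps_congr2 N hN h 1 d

lemma myeps_twoneg (N : ℕ) (hN : 0 < N) {a b : ℤ} (h : a ≡ b [ZMOD (N:ℤ)]) (d : ℤ) :
    myeps N ^ (-(2*a+d)) = myeps N ^ (-(2*b+d)) := by
  rw [show -(2*a+d) = 2*a*(-1)+(-d) by ring, show -(2*b+d) = 2*b*(-1)+(-d) by ring]
  exact myeps_congr2 N hN h (-1) (-d)

lemma myeps_twosub (N : ℕ) (hN : 0 < N) {a b : ℤ} (h : a ≡ b [ZMOD (N:ℤ)]) (d : ℤ) :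
    myeps N ^ (2*a-d) = myeps N ^ (2*b-d) := by
  rw [show 2*a-d = 2*a*1+(-d) by ring, show 2*b-d = 2*b*1+(-d) by ring]
  exact myeps_congr2 N hN h 1 (-d)

lemma myeps_twonegsub (N : ℕ) (hN : 0 < N) {a b : ℤ} (h : a ≡ b [ZMOD (N:ℤ)]) (d : ℤ) :
    myeps N ^ (-(2*a-d)) = myeps N ^ (-(2*b-d)) := by
  rw [show -(2*a-d) = 2*a*(-1)+d by ring, show -(2*b-d) = 2*b*(-1)+d by ring]
  exact myeps_congr2 N hN h (-1) d

lemma my_cos2 (N : ℕ) (v : ℕ) :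
    ((2 * Real.cos (2 * Real.pi * (v:ℝ) / N) : ℝ) : ℂ)
      = myeps N ^ (2*(v:ℤ)) + myeps N ^ (-(2*(v:ℤ))) := by
  rw [show (2 * Real.pi * (v:ℝ)/N) = Real.pi * ((2*(v:ℤ) : ℤ):ℝ)/N by push_cast; ring]
  rw [Complex.ofReal_mul, my_cos_eq]
  push_cast; ring

lemma my_cosp (N : ℕ) (v : ℕ) :
    ((Real.cos (Real.pi * (2*(v:ℝ)+1) / N) : ℝ) : ℂ)
      = (myeps N ^ (2*(v:ℤ)+1) + myeps N ^ (-(2*(v:ℤ)+1))) / 2 := by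
  rw [show (Real.pi * (2*(v:ℝ)+1)/N) = Real.pi * ((2*(v:ℤ)+1 : ℤ):ℝ)/N by push_cast; ring]
  rw [my_cos_eq]

lemma my_cosm (N : ℕ) (v : ℕ) :
    ((Real.cos (Real.pi * (2*(v:ℝ)-1) / N) : ℝ) : ℂ)
      = (myeps N ^ (2*(v:ℤ)-1) + myeps N ^ (-(2*(v:ℤ)-1))) / 2 := by
  rw [show (Real.pi * (2*(v:ℝ)-1)/N) = Real.pi * ((2*(v:ℤ)-1 : ℤ):ℝ)/N by push_cast; ring]
  rw [my_cos_eq]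

lemma my_merge1 (e F X Y : ℂ) : e * ((X + Y)/2 * F) = (e*X + e*Y)/2 * F := by ring
lemma my_merge2 (e F X Y : ℂ) : (X + Y)/2 * (e * F) = (X*e + Y*e)/2 * F := by ring

theorem statement5 (N : ℕ) (hN : 0 < N) :
    (∀ f : ZMod N → ℂ, dft N (J0op N f) = J0op N (dft N f)) ∧
    (∀ f : ZMod N → ℂ, dft N (J1op N f) = J1op N (dft N f)) ∧
    (∀ a : ℤ, ∀ f : ZMod N → ℂ,
      dft N (fun x => J1op N f x - (Real.cos (Real.pi * (2 * (a : ℝ) + 1) / N) : ℂ) * J0op N f x)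
        = fun x => J1op N (dft N f) x -
            (Real.cos (Real.pi * (2 * (a : ℝ) + 1) / N) : ℂ) * J0op N (dft N f) x) := by
  haveI : NeZero N := ⟨hN.ne'⟩
  have hε : myeps N ≠ 0 := myeps_ne N
  have hm : ∀ m n : ℤ, myeps N ^ m * myeps N ^ n = myeps N ^ (m+n) :=
    fun m n => (zpow_add₀ hε m n).symm
  have key : ∀ y : ZMod N, (((y+1 : ZMod N)).val:ℤ) ≡ (y.val:ℤ) + 1 [ZMOD (N:ℤ)] ∧
      (((y-1 : ZMod N)).val:ℤ) ≡ (y.val:ℤ) - 1 [ZMOD (N:ℤ)] := by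
    intro y
    constructor
    · have := my_val_shift N y 1
      rwa [Int.cast_one] at this
    · have := my_val_shift N y (-1)
      rwa [Int.cast_neg, Int.cast_one, ← sub_eq_add_neg, ← sub_eq_add_neg] at this
  have h0 : ∀ f : ZMod N → ℂ, dft N (J0op N f) = J0op N (dft N f) := by
    intro f
    funext k
    simp only [J0op, my_dft_eq]
    have hre1 : ∑ x : ZMod N, myeps N ^ (-2 * ((x.val:ℤ)) * (k.val:ℤ)) * f (x+1)
        = ∑ x : ZMod N, myeps N ^ (-2 * (((x - 1 : ZMod N).val:ℤ)) * (k.val:ℤ)) * f x := by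
      apply Fintype.sum_equiv (Equiv.addRight (1 : ZMod N))
      intro x
      simp
    have hre2 : ∑ x : ZMod N, myeps N ^ (-2 * ((x.val:ℤ)) * (k.val:ℤ)) * f (x-1)
        = ∑ x : ZMod N, myeps N ^ (-2 * (((x + 1 : ZMod N).val:ℤ)) * (k.val:ℤ)) * f x := by
      apply Fintype.sum_equiv (Equiv.subRight (1 : ZMod N))
      intro x
      simp
    simp only [mul_add, Finset.sum_add_distrib]
    rw [hre1, hre2, Finset.mul_sum]
    simp only [← Finset.sum_add_distrib]
    refine Finset.sum_congr rfl fun x _ => ?_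
    set u := (x.val : ℤ) with hu; set v := (k.val : ℤ) with hv
    have hx1 := (key x).1
    have hx2 := (key x).2
    have hk1 := (key k).1
    have hk2 := (key k).2
    rw [my_cos2 N x.val, my_cos2 N k.val, myeps_neg2 N hN hx2 v, myeps_neg2 N hN hx1 v,
      myeps_neg2' N hN hk1 u, myeps_neg2' N hN hk2 u]
    simp only [mul_add, add_mul, ← mul_assoc, hm]
    simp only [hu, hv]
    ring_nf
  have h1 : ∀ f : ZMod N → ℂ, dft N (J1op N f) = J1op N (dft N f) := by
    intro f
    funext k
    simp only [J1op, my_dft_eq]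
    have hre1 : ∑ x : ZMod N, myeps N ^ (-2 * ((x.val:ℤ)) * (k.val:ℤ)) *
          (((Real.cos (Real.pi * (2 * (x.val : ℝ) + 1) / N) : ℝ) : ℂ) * f (x+1))
        = ∑ x : ZMod N, myeps N ^ (-2 * (((x - 1 : ZMod N).val:ℤ)) * (k.val:ℤ)) *
          (((Real.cos (Real.pi * (2 * (((x - 1 : ZMod N).val) : ℝ) + 1) / N) : ℝ) : ℂ) * f x) := by
      apply Fintype.sum_equiv (Equiv.addRight (1 : ZMod N))
      intro x
      simp
    have hre2 : ∑ x : ZMod N, myeps N ^ (-2 * ((x.val:ℤ)) * (k.val:ℤ)) *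
          (((Real.cos (Real.pi * (2 * (x.val : ℝ) - 1) / N) : ℝ) : ℂ) * f (x-1))
        = ∑ x : ZMod N, myeps N ^ (-2 * (((x + 1 : ZMod N).val:ℤ)) * (k.val:ℤ)) *
          (((Real.cos (Real.pi * (2 * (((x + 1 : ZMod N).val) : ℝ) - 1) / N) : ℝ) : ℂ) * f x) := by
      apply Fintype.sum_equiv (Equiv.subRight (1 : ZMod N))
      intro x
      simp
    have hsplit : ∀ (g h : ZMod N → ℂ),
        (∑ x : ZMod N, myeps N ^ (-2 * ((x.val:ℤ)) * (k.val:ℤ)) * (g x + h x))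
          = (∑ x : ZMod N, myeps N ^ (-2 * ((x.val:ℤ)) * (k.val:ℤ)) * g x)
            + ∑ x : ZMod N, myeps N ^ (-2 * ((x.val:ℤ)) * (k.val:ℤ)) * h x := by
      intro g h
      simp only [mul_add, Finset.sum_add_distrib]
    rw [hsplit (fun x => ((Real.cos (Real.pi * (2 * (x.val : ℝ) + 1) / N) : ℝ) : ℂ) * f (x+1))
      (fun x => ((Real.cos (Real.pi * (2 * (x.val : ℝ) - 1) / N) : ℝ) : ℂ) * f (x-1)),
      hre1, hre2, Finset.mul_sum, Finset.mul_sum]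
    simp only [← Finset.sum_add_distrib]
    refine Finset.sum_congr rfl fun x _ => ?_
    set u := (x.val : ℤ) with hu; set v := (k.val : ℤ) with hv
    have hx1 := (key x).1
    have hx2 := (key x).2
    have hk1 := (key k).1
    have hk2 := (key k).2
    rw [my_cosp N (x-1 : ZMod N).val, my_cosm N (x+1 : ZMod N).val, my_cosp N k.val,
      my_cosm N k.val,
      myeps_neg2 N hN hx2 v, myeps_neg2 N hN hx1 v,
      myeps_neg2' N hN hk1 u, myeps_neg2' N hN hk2 u,
      myeps_two N hN hx2 1, myeps_twoneg N hN hx2 1,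
      myeps_twosub N hN hx1 1, myeps_twonegsub N hN hx1 1]
    rw [my_merge1, my_merge1, my_merge2, my_merge2]
    simp only [hm]
    simp only [hu, hv]
    ring_nf
  refine ⟨h0, h1, ?_⟩
  intro a f
    -- linearity of dft
  funext k
  have lin : dft N (fun x => J1op N f x -
      (Real.cos (Real.pi * (2 * (a : ℝ) + 1) / N) : ℂ) * J0op N f x) k
      = dft N (J1op N f) k -
        (Real.cos (Real.pi * (2 * (a : ℝ) + 1) / N) : ℂ) * dft N (J0op N f) k := by
    simp only [dft, mul_sub, Finset.sum_sub_distrib, Finset.mul_sum, mul_left_comm]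
  rw [lin, h0 f, h1 f]
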